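/- (Descent of Gradient Norm in Autoregressive Process.) Let X and C be real normed vector spaces, let p : X × C → ℝ, let c_π ∈ C, let (c_i)_{i∈ℕ} be a sequence in C, and let δ, L, M₁, M₂, C₀ > 0 and ρ ∈ (0,1) be constants. Assume: (i) for every x ∈ X and c ∈ C, the map x ↦ p(x,c) is differentiable at x with Fréchet derivative D(x,c); (ii) p(x,c) ≥ δ for all x, c; (iii) ‖D(x,c₁) − D(x,c₂)‖ ≤ L‖c₁ − c₂‖ for all x, c₁, c₂ (Lipschitz gradient in the condition); (iv) |p(x,c₁) − p(x,c₂)| ≤ L‖c₁ − c₂‖ for all x, c₁, c₂; (v) p(x,c_π) ≤ M₂ for all x; (vi) ‖D(x,c_π)‖ ≤ M₁ for all x; (vii) ‖c_i − c_π‖ ≤ C₀·ρ^i for all i ∈ ℕ. Then for every x ∈ X and i ∈ ℕ: ‖D(x,c_i)‖ / p(x,c_i) ≤ M·ρ^i + m, where M = (L·C₀/δ²)(M₂ + M₁) and m = M₁/δ. Since p > 0, the left-hand side equals the norm of the gradient of x ↦ log p(x,c_i), so ‖∇ₓ log p(x|c_i)‖ ≤ M·ρ^i + m. -/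
import Mathlib

/-- Descent of Gradient Norm in Autoregressive Process (Theorem 2): if the conditional
density `p (x, c)` is uniformly bounded below by `δ`, depends Lipschitz-continuously
(together with its Fréchet derivative `D (x, c)` in `x`) on the condition `c`, the
stationary density and its derivative are bounded by `M₂` and `M₁`, and the conditions
converge geometrically (`‖cᵢ - c_π‖ ≤ C₀ ρⁱ`), then the norm of the conditional score
`‖∇ₓ log p(x | cᵢ)‖ = ‖D (x, cᵢ)‖ / p (x, cᵢ)` satisfies
`‖D (x, cᵢ)‖ / p (x, cᵢ) ≤ M ρⁱ + m` with `M = (L C₀ / δ²)(M₂ + M₁)` and `m = M₁/δ`. -/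
theorem descent_of_gradient_norm_in_autoregressive_process
    {X Cond : Type*} [NormedAddCommGroup X] [NormedSpace ℝ X]
    [NormedAddCommGroup Cond] [NormedSpace ℝ Cond]
    (p : X → Cond → ℝ) (D : X → Cond → X →L[ℝ] ℝ)
    (cπ : Cond) (c : ℕ → Cond)
    (δ L M₁ M₂ C₀ ρ : ℝ)
    (hδ : 0 < δ) (hL : 0 < L) (hM₁ : 0 < M₁) (hM₂ : 0 < M₂) (hC₀ : 0 < C₀)
    (hρ : ρ ∈ Set.Ioo (0 : ℝ) 1)
    (hdiff : ∀ x cc, HasFDerivAt (fun y => p y cc) (D x cc) x)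
    (hpos : ∀ x cc, δ ≤ p x cc)
    (hLipD : ∀ x c₁ c₂, ‖D x c₁ - D x c₂‖ ≤ L * ‖c₁ - c₂‖)
    (hLipp : ∀ x c₁ c₂, |p x c₁ - p x c₂| ≤ L * ‖c₁ - c₂‖)
    (hboundp : ∀ x, p x cπ ≤ M₂)
    (hboundD : ∀ x, ‖D x cπ‖ ≤ M₁)
    (hconv : ∀ i : ℕ, ‖c i - cπ‖ ≤ C₀ * ρ ^ i) :
    ∀ (x : X) (i : ℕ),
      ‖D x (c i)‖ / p x (c i) ≤ (L * C₀ / δ ^ 2) * (M₂ + M₁) * ρ ^ i + M₁ / δ := by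
  intro x i
  have hρi : (0:ℝ) < ρ ^ i := pow_pos hρ.1 i
  have hp : δ ≤ p x (c i) := hpos x (c i)
  have hδM₂ : δ ≤ M₂ := le_trans (hpos x cπ) (hboundp x)
  have hDle : ‖D x (c i)‖ ≤ M₁ + L * (C₀ * ρ ^ i) := by
    calc ‖D x (c i)‖ = ‖D x cπ + (D x (c i) - D x cπ)‖ := by rw [add_sub_cancel]
      _ ≤ ‖D x cπ‖ + ‖D x (c i) - D x cπ‖ := norm_add_le _ _
      _ ≤ M₁ + L * ‖c i - cπ‖ := add_le_add (hboundD x) (hLipD x _ _)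
      _ ≤ M₁ + L * (C₀ * ρ ^ i) := by
          have := hconv i
          nlinarith
  have h1 : ‖D x (c i)‖ / p x (c i) ≤ (M₁ + L * (C₀ * ρ ^ i)) / δ := by
    apply div_le_div₀ (by positivity) hDle hδ hp
  refine h1.trans ?_
  rw [add_div]
  have h2 : L * (C₀ * ρ ^ i) / δ ≤ (L * C₀ / δ ^ 2) * (M₂ + M₁) * ρ ^ i := by
    have hδ2 : (0:ℝ) < δ ^ 2 := by positivity
    rw [div_le_iff₀ hδ, div_mul_eq_mul_div, div_mul_eq_mul_div, div_mul_eq_mul_div,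
      le_div_iff₀ hδ2]
    have key : δ ≤ M₂ + M₁ := by linarith
    nlinarith [mul_pos (mul_pos (mul_pos hL hC₀) hρi) hδ]
  linarith
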